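/- (Main Proposition) A time-changed Brownian market S_t = S_0·exp(μT_t + W(T_t)), where T is an independent subordinator with Lévy measure ρ ≠ 0, is symmetric—i.e., its Lévy density ν satisfies ν(x) = e^{−x}ν(−x) for all x—if and only if μ = −1/2. -/

import Mathlib

open MeasureTheory Real

/-- Main Proposition: a time-changed Brownian market with drift μ, whose Lévy
density is ν(x) = ∫₀^∞ (2πy)^{-1/2} e^{-(x-μy)²/(2y)} ρ(dy) for a nonzero
subordinator Lévy measure ρ (assumed to make ν finite and positive), is
symmetric — ν(x) = e^{-x} ν(-x) for all x — iff μ = -1/2. -/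
theorem time_changed_brownian_market_symmetric_iff
    (μ : ℝ) (ρ : Measure (Set.Ioi (0 : ℝ))) (hρ : ρ ≠ 0)
    (ν : ℝ → ℝ)
    (hν : ∀ x : ℝ, ν x =
      ∫ y : Set.Ioi (0 : ℝ),
        (1 / Real.sqrt (2 * Real.pi * (y : ℝ))) *
          Real.exp (-(x - μ * (y : ℝ)) ^ 2 / (2 * (y : ℝ))) ∂ρ)
    (hν_pos : ∀ x : ℝ, 0 < ν x)
    (hν_int : ∀ x : ℝ, Integrable (fun y : Set.Ioi (0 : ℝ) =>
        (1 / Real.sqrt (2 * Real.pi * (y : ℝ))) *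
          Real.exp (-(x - μ * (y : ℝ)) ^ 2 / (2 * (y : ℝ)))) ρ) :
    (∀ x : ℝ, ν x = Real.exp (-x) * ν (-x)) ↔ μ = -1/2 := by
  set G : ℝ → ℝ := fun x => ∫ y : Set.Ioi (0 : ℝ),
      (1 / Real.sqrt (2 * Real.pi * (y : ℝ))) *
        Real.exp (-(x ^ 2) / (2 * (y : ℝ)) - μ ^ 2 * (y : ℝ) / 2) ∂ρ with hGdef
  have key : ∀ x : ℝ, ν x = Real.exp (μ * x) * G x := by
    intro x
    rw [hν x, hGdef]
    rw [← integral_const_mul]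
    congr 1
    funext y
    have hy : (0 : ℝ) < (y : ℝ) := y.2
    have harg : -(x - μ * (y : ℝ)) ^ 2 / (2 * (y : ℝ)) =
        μ * x + (-(x ^ 2) / (2 * (y : ℝ)) - μ ^ 2 * (y : ℝ) / 2) := by
      field_simp
      ring
    rw [harg, Real.exp_add]
    ring
  have hGeven : ∀ x : ℝ, G (-x) = G x := by
    intro x
    simp [hGdef, neg_sq]
  constructor
  · intro h
    have h1 := h 1
    rw [key 1, key (-1), hGeven 1] at h1
    have hG1 : 0 < G 1 := by
      have hp := hν_pos 1
      rw [key 1] at hp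
      nlinarith [Real.exp_pos (μ * 1)]
    have h2 : Real.exp (μ * 1) = Real.exp (-1) * Real.exp (μ * -1) := by
      have := mul_right_cancel₀ hG1.ne' (by linarith [h1] : Real.exp (μ * 1) * G 1 =
        (Real.exp (-1) * Real.exp (μ * -1)) * G 1)
      exact this
    rw [← Real.exp_add] at h2
    have := Real.exp_injective h2
    linarith
  · intro h
    subst h
    intro x
    rw [key x, key (-x), hGeven x, ← mul_assoc, ← Real.exp_add]
    have : (-1 / 2 : ℝ) * x = -x + -1 / 2 * -x := by ring
    rw [this]
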